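/- Let φ : S² → ℝ be continuous and even, and define Φ : ℝ² → ℝ by Φ(x₁,x₂) = 2·φ((x₁,x₂,1)/√(1+x₁²+x₂²)) / (1+x₁²+x₂²). Then for every ω ∈ S¹ and every s ∈ ℝ, RΦ(ω, s) = (1/√(1+s²)) · Fφ((ω₁, ω₂, −s)/√(1+s²)), where ω = (ω₁, ω₂). -/

import Mathlib

open MeasureTheory Filter Real
open scoped Topology RealInnerProductSpace

noncomputable section

abbrev E3 := EuclideanSpace ℝ (Fin 3)
abbrev E2 := EuclideanSpace ℝ (Fin 2)

def vec3 (a b c : ℝ) : E3 := (WithLp.equiv 2 (Fin 3 → ℝ)).symm ![a, b, c]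
def vec2 (a b : ℝ) : E2 := (WithLp.equiv 2 (Fin 2 → ℝ)).symm ![a, b]

/-- The great circle of the unit sphere in `ℝ³` orthogonal to `θ`. -/
def circleSet (θ : E3) : Set E3 := {α | α ∈ Metric.sphere (0:E3) 1 ∧ ⟪θ, α⟫ = 0}

/-- The Minkowski–Funk transform: integral over the great circle orthogonal to `θ`
with respect to one-dimensional Hausdorff (arc-length) measure. -/
def funkT (φ : E3 → ℝ) (θ : E3) : ℝ := ∫ α in circleSet θ, φ α ∂μH[1]

/-- The spherical Radon transform with centers on the sphere of radius `r`. -/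
def sphRadon (r : ℝ) (f : E3 → ℝ) (α : E3) (t : ℝ) : ℝ :=
  ∫ β in Metric.sphere (0:E3) 1, f (r • α + t • β) ∂μH[2]

/-- The transform `R_P` arising in PAT with circular integrating detectors. -/
def RP (r : ℝ) (f : E3 → ℝ) (θ : E3) (t : ℝ) : ℝ :=
  ∫ α in circleSet θ, (∫ β in Metric.sphere (0:E3) 1, f (r • α + t • β) ∂μH[2]) ∂μH[1]

/-- Rotation of a vector in `ℝ²` by `π/2`. -/
def perp (ω : E2) : E2 := vec2 (-(ω 1)) (ω 0)

/-- The two-dimensional Radon transform. -/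
def radon2 (Φ : E2 → ℝ) (ω : E2) (s : ℝ) : ℝ := ∫ ν : ℝ, Φ (s • ω + ν • perp ω)

/-- Principal value of `∫ F`, where the singular set is removed via `{s | ε < |e s|}`:
the limit as `ε → 0⁺` of the integrals over `{s | |e s| > ε}`. -/
def pv (F : ℝ → ℝ) (e : ℝ → ℝ) : ℝ :=
  limUnder (𝓝[>] (0:ℝ)) (fun ε => ∫ s in {s | ε < |e s|}, F s)

/-- The Hilbert transform `Hu(s) = (1/π) p.v. ∫ u(s')/(s-s') ds'`. -/
def hilbertT (u : ℝ → ℝ) (s : ℝ) : ℝ :=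
  (1/π) * pv (fun s' => u s' / (s - s')) (fun s' => s - s')

/-- The backprojection operator `R#u(x) = ∫_{S¹} u(ω, x·ω) dS(ω)`. -/
def backproj (u : E2 → ℝ → ℝ) (x : E2) : ℝ :=
  ∫ ω in Metric.sphere (0:E2) 1, u ω ⟪x, ω⟫ ∂μH[1]


section StereoAux
open Set Complex
open scoped ENNReal NNReal

set_option maxHeartbeats 1000000

namespace StereoCircleAux




def ce (t : ℝ) : ℂ := Complex.exp (t * Complex.I)

lemma ce_abs (t : ℝ) : ‖ce t‖ = 1 := by
  simp [ce, Complex.norm_exp_ofReal_mul_I]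

lemma ce_mem_sphere (t : ℝ) : ce t ∈ Metric.sphere (0:ℂ) 1 := by
  simp [Complex.dist_eq, ce_abs]

lemma ce_hasDerivAt (t : ℝ) : HasDerivAt ce (ce t * Complex.I) t := by
  have h1 : HasDerivAt (fun t : ℝ => (t : ℂ) * Complex.I) Complex.I t := by
    simpa using ((hasDerivAt_id t).ofReal_comp.mul_const Complex.I)
  exact (Complex.hasDerivAt_exp (t * Complex.I)).comp t h1

lemma ce_lipschitz : LipschitzWith 1 ce := by
  have : LipschitzOnWith 1 ce univ := by
    apply (convex_univ (𝕜 := ℝ)).lipschitzOnWith_of_nnnorm_hasDerivWithin_le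
      (f' := fun t => ce t * Complex.I)
      (fun x _ => (ce_hasDerivAt x).hasDerivWithinAt)
    intro x _
    simp [nnnorm, Complex.norm_exp, ce]
  rwa [lipschitzOnWith_univ] at this

lemma ce_eq_iff {t t' : ℝ} : ce t = ce t' ↔ ∃ n : ℤ, t = t' + n * (2 * Real.pi) := by
  rw [ce, ce, Complex.exp_eq_exp_iff_exists_int]
  constructor
  · rintro ⟨n, hn⟩
    refine ⟨n, ?_⟩
    have := congrArg Complex.im hn
    push_cast at this
    simpa using this
  · rintro ⟨n, hn⟩
    refine ⟨n, ?_⟩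
    rw [hn]; push_cast; ring



lemma ce_continuous : Continuous ce := ce_lipschitz.continuous

lemma mul_im_lipschitz (w : ℂ) (hw : ‖w‖ = 1) :
    LipschitzWith 1 (fun z : ℂ => (z * w).im) := by
  apply LipschitzWith.of_dist_le_mul
  intro x y
  rw [Real.dist_eq, NNReal.coe_one, one_mul]
  have : (x * w).im - (y * w).im = ((x - y) * w).im := by
    rw [sub_mul]; simp
  rw [this]
  calc |((x - y) * w).im| ≤ ‖(x - y) * w‖ := Complex.abs_im_le_norm _
    _ = ‖x - y‖ := by rw [norm_mul, hw, mul_one]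
    _ = dist x y := (Complex.dist_eq x y).symm

lemma ce_proj (t m : ℝ) : (ce t * ce (-m)).im = Real.sin (t - m) := by
  rw [ce, ce, ← Complex.exp_add]
  have : (t : ℂ) * Complex.I + (-m : ℝ) * Complex.I = ((t - m : ℝ) : ℂ) * Complex.I := by
    push_cast; ring
  rw [this, Complex.exp_ofReal_mul_I_im]

lemma arc_upper (a b : ℝ) : μH[1] (ce '' Icc a b) ≤ ENNReal.ofReal (b - a) := by
  calc μH[1] (ce '' Icc a b) ≤ (1 : ℝ≥0) ^ (1:ℝ) * μH[1] (Icc a b) :=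
        ce_lipschitz.hausdorffMeasure_image_le one_pos.le _
    _ = μH[1] (Icc a b) := by simp
    _ = ENNReal.ofReal (b - a) := by
        rw [MeasureTheory.hausdorffMeasure_real]; simp [Real.volume_Icc]

lemma arc_lower_piece {c d : ℝ} (hcd : c ≤ d) :
    ENNReal.ofReal (2 * Real.sin ((d - c) / 2)) ≤ μH[1] (ce '' Icc c d) := by
  set m := (c + d) / 2 with hm
  set h := (d - c) / 2 with hh
  have key : Icc (-Real.sin h) (Real.sin h) ⊆ (fun t => Real.sin (t - m)) '' Icc c d := by
    have hc : Real.sin (c - m) = -Real.sin h := by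
      rw [hm, hh]; rw [show c - (c + d) / 2 = -((d - c) / 2) by ring, Real.sin_neg]
    have hd : Real.sin (d - m) = Real.sin h := by
      rw [hm, hh]; congr 1; ring
    have := intermediate_value_Icc hcd
      (Continuous.continuousOn (by continuity : Continuous (fun t => Real.sin (t - m))))
    rw [hc, hd] at this; exact this
  have himg : (fun t => Real.sin (t - m)) '' Icc c d
      = (fun z : ℂ => (z * ce (-m)).im) '' (ce '' Icc c d) := by
    rw [Set.image_image]
    exact Set.image_congr fun t _ => (ce_proj t m).symm
  calc ENNReal.ofReal (2 * Real.sin h)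
      = μH[1] (Icc (-Real.sin h) (Real.sin h)) := by
        rw [MeasureTheory.hausdorffMeasure_real, Real.volume_Icc]
        congr 1; ring
    _ ≤ μH[1] ((fun t => Real.sin (t - m)) '' Icc c d) := measure_mono key
    _ = μH[1] ((fun z : ℂ => (z * ce (-m)).im) '' (ce '' Icc c d)) := by rw [himg]
    _ ≤ (1 : ℝ≥0) ^ (1:ℝ) * μH[1] (ce '' Icc c d) :=
        (mul_im_lipschitz _ (ce_abs _)).hausdorffMeasure_image_le one_pos.le _
    _ = μH[1] (ce '' Icc c d) := by simp

lemma ce_image_Ico {c d : ℝ} (hcd : c ≤ d) (h2 : d - c < 2*π) :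
    ce '' Ico c d = ce '' Icc c d \ {ce d} := by
  ext z
  constructor
  · rintro ⟨t, ht, rfl⟩
    refine ⟨⟨t, Ico_subset_Icc_self ht, rfl⟩, ?_⟩
    simp only [mem_singleton_iff, ce_eq_iff]
    rintro ⟨n, hn⟩
    have h1 : (n:ℝ)*(2*π) = t - d := by linarith
    have hneg : t - d < 0 := by linarith [ht.2]
    have hgt : -(2*π) < t - d := by linarith [ht.1]
    have hn1 : (-1:ℤ) < n := by
      have : (-1:ℝ) < (n:ℝ) := by nlinarith [Real.pi_pos]
      exact_mod_cast this
    have hn2 : (n:ℤ) < 0 := by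
      have : (n:ℝ) < 0 := by nlinarith [Real.pi_pos]
      exact_mod_cast this
    omega
  · rintro ⟨⟨t, ht, rfl⟩, hz⟩
    simp only [mem_singleton_iff] at hz
    exact ⟨t, ⟨ht.1, lt_of_le_of_ne ht.2 (fun h => hz (by rw [h]))⟩, rfl⟩

lemma measurable_arc {c d : ℝ} : MeasurableSet (ce '' Icc c d) :=
  (isCompact_Icc.image ce_continuous).isClosed.measurableSet

lemma arc_lower {a b : ℝ} (hab : a ≤ b) (h2 : b - a ≤ 2*π) :
    ENNReal.ofReal (b - a) ≤ μH[1] (ce '' Icc a b) := by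
  haveI : NullSingletonClass (μH[1] : Measure ℂ) := MeasureTheory.Measure.noAtoms_hausdorff ℂ one_pos
  rcases eq_or_lt_of_le hab with rfl | hab'
  · simp
  have hx : 0 < b - a := sub_pos.2 hab'
  -- step 1: for each n ≥ 2 the sum bound
  have key : ∀ n : ℕ, 2 ≤ n →
      ENNReal.ofReal ((n:ℝ) * (2 * Real.sin ((b-a)/(2*n)))) ≤ μH[1] (ce '' Icc a b) := by
    intro n hn
    have hn0 : (0:ℝ) < n := by positivity
    obtain ⟨h, hh⟩ : ∃ h : ℝ, h = (b - a) / n := ⟨_, rfl⟩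
    have hhpos : 0 < h := by rw [hh]; exact div_pos hx hn0
    have hhle : h < 2*π := by
      have : h ≤ (b-a)/2 := by
        rw [hh]
        apply div_le_div_of_nonneg_left hx.le two_pos (by exact_mod_cast hn)
      have h2' : (b-a)/2 ≤ π := by linarith
      have := Real.pi_pos
      linarith
    obtain ⟨P, hP⟩ : ∃ P : ℕ → Set ℂ, P = fun i : ℕ => ce '' Ico (a + i*h) (a + (i+1)*h) := ⟨_, rfl⟩
    have hPmeas : ∀ i, MeasurableSet (P i) := by
      intro i
      rw [hP]; simp only
      rw [ce_image_Ico (by nlinarith) (by nlinarith [hhpos, hhle])]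
      exact measurable_arc.diff (measurableSet_singleton _)
    have hPsub : ∀ i ∈ Finset.range n, P i ⊆ ce '' Icc a b := by
      intro i hi
      simp only [Finset.mem_range] at hi
      rw [hP]; simp only
      apply Set.image_mono
      intro t ht
      have hi' : (i:ℝ) + 1 ≤ n := by exact_mod_cast hi
      constructor
      · nlinarith [ht.1]
      · have : a + ((i:ℝ)+1)*h ≤ a + n*h := by nlinarith
        have hb : a + (n:ℝ)*h = b := by rw [hh]; field_simp; ring
        nlinarith [ht.2]
    have hdisj : (↑(Finset.range n) : Set ℕ).PairwiseDisjoint P := by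
      intro i hi j hj hij
      simp only [Finset.coe_range, mem_Iio] at hi hj
      subst hP
      rw [Function.onFun, Set.disjoint_left]
      rintro z ⟨t, ht, rfl⟩ ⟨t', ht', hz⟩
      have htt' : t = t' := by
        rcases ce_eq_iff.mp hz.symm with ⟨k, hk⟩
        have hb1 : t < b := by
          have : a + ((i:ℝ)+1)*h ≤ a + n*h := by
            have : (i:ℝ) + 1 ≤ n := by exact_mod_cast hi
            nlinarith
          have hb : a + (n:ℝ)*h = b := by rw [hh]; field_simp; ring
          nlinarith [ht.2]
        have hb2 : t' < b := by
          have : a + ((j:ℝ)+1)*h ≤ a + n*h := by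
            have : (j:ℝ) + 1 ≤ n := by exact_mod_cast hj
            nlinarith
          have hb : a + (n:ℝ)*h = b := by rw [hh]; field_simp; ring
          nlinarith [ht'.2]
        have ha1 : a ≤ t := by nlinarith [ht.1]
        have ha2 : a ≤ t' := by nlinarith [ht'.1]
        have hk1 : (k:ℝ)*(2*π) = t - t' := by linarith
        have hlt1 : t - t' < 2*π := by linarith
        have hgt1 : -(2*π) < t - t' := by linarith
        have hk0 : k = 0 := by
          have u1 : (k:ℝ) < 1 := by nlinarith [Real.pi_pos]
          have u2 : (-1:ℝ) < (k:ℝ) := by nlinarith [Real.pi_pos]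
          have v1 : (k:ℤ) < 1 := by exact_mod_cast u1
          have v2 : (-1:ℤ) < k := by exact_mod_cast u2
          omega
        rw [hk0] at hk1
        simp at hk1
        linarith
      subst htt'
      rcases Nat.lt_or_ge i j with hlt | hge
      · have : (i:ℝ) + 1 ≤ j := by exact_mod_cast hlt
        nlinarith [ht.1, ht.2, ht'.1, ht'.2, hhpos]
      · have hlt : j < i := by omega
        have : (j:ℝ) + 1 ≤ i := by exact_mod_cast hlt
        nlinarith [ht.1, ht.2, ht'.1, ht'.2, hhpos]
    have hpiece : ∀ i : ℕ, ENNReal.ofReal (2 * Real.sin (h/2)) ≤ μH[1] (P i) := by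
      intro i
      rw [hP]; simp only
      have hIcc : ENNReal.ofReal (2 * Real.sin (h/2))
          ≤ μH[1] (ce '' Icc (a+i*h) (a+(i+1)*h)) := by
        have := arc_lower_piece (c := a+i*h) (d := a+(i+1)*h) (by nlinarith)
        have heq : (a+((i:ℝ)+1)*h - (a+i*h))/2 = h/2 := by ring
        rwa [heq] at this
      have hsub : ce '' Icc (a+i*h) (a+(i+1)*h)
          ⊆ ce '' Ico (a+i*h) (a+(i+1)*h) ∪ {ce (a+(i+1)*h)} := by
        rintro z ⟨t, ht, rfl⟩
        rcases eq_or_lt_of_le ht.2 with heq | hlt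
        · right; rw [heq]; rfl
        · left; exact ⟨t, ⟨ht.1, hlt⟩, rfl⟩
      refine le_trans hIcc (le_trans (measure_mono hsub) ?_)
      calc μH[1] (ce '' Ico (a+i*h) (a+(i+1)*h) ∪ {ce (a+(i+1)*h)})
          ≤ μH[1] (ce '' Ico (a+i*h) (a+(i+1)*h)) + μH[1] {ce (a+(i+1)*h)} :=
            measure_union_le _ _
        _ = μH[1] (ce '' Ico (a+i*h) (a+(i+1)*h)) := by rw [measure_singleton, add_zero]
    calc ENNReal.ofReal ((n:ℝ) * (2 * Real.sin ((b-a)/(2*n))))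
        = ∑ _i ∈ Finset.range n, ENNReal.ofReal (2 * Real.sin (h/2)) := by
          have harg : (b-a)/(2*(n:ℝ)) = h/2 := by rw [hh, div_div, mul_comm]
          rw [harg, ENNReal.ofReal_mul (by positivity), ENNReal.ofReal_natCast,
            Finset.sum_const, Finset.card_range, nsmul_eq_mul]
      _ ≤ ∑ i ∈ Finset.range n, μH[1] (P i) := Finset.sum_le_sum (fun i _ => hpiece i)
      _ = μH[1] (⋃ i ∈ Finset.range n, P i) :=
          (measure_biUnion_finset hdisj (fun i _ => hPmeas i)).symm
      _ ≤ μH[1] (ce '' Icc a b) := measure_mono (Set.iUnion₂_subset hPsub)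
  -- step 2: take limits
  have hlim : Filter.Tendsto (fun n : ℕ => (n:ℝ) * (2 * Real.sin ((b-a)/(2*n))))
      Filter.atTop (nhds (b - a)) := by
    have hslope : Filter.Tendsto (fun y : ℝ => Real.sin y / y) (nhdsWithin 0 {0}ᶜ) (nhds 1) := by
      have := (Real.hasDerivAt_sin 0)
      rw [hasDerivAt_iff_tendsto_slope] at this
      simp only [Real.cos_zero] at this
      refine this.congr' ?_
      filter_upwards [self_mem_nhdsWithin] with y hy
      simp [slope_def_field]
    have hy : Filter.Tendsto (fun n : ℕ => (b-a)/(2*n)) Filter.atTop (nhdsWithin 0 {0}ᶜ) := by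
      apply tendsto_nhdsWithin_of_tendsto_nhds_of_eventually_within
      · apply Filter.Tendsto.div_atTop tendsto_const_nhds
        exact Filter.Tendsto.const_mul_atTop two_pos tendsto_natCast_atTop_atTop
      · filter_upwards [Filter.eventually_gt_atTop 0] with n hn
        have : (0:ℝ) < 2*n := by positivity
        simp only [mem_compl_iff, mem_singleton_iff]
        positivity
    have := (hslope.comp hy).const_mul (b - a)
    rw [mul_one] at this
    refine this.congr' ?_
    filter_upwards [Filter.eventually_gt_atTop 0] with n hn
    have h2n : (0:ℝ) < 2*n := by positivity
    have hba : b - a ≠ 0 := hx.ne'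
    simp only [Function.comp_apply]
    field_simp
  have : Filter.Tendsto (fun n : ℕ => ENNReal.ofReal ((n:ℝ) * (2 * Real.sin ((b-a)/(2*n)))))
      Filter.atTop (nhds (ENNReal.ofReal (b-a))) :=
    (ENNReal.continuous_ofReal.tendsto _).comp hlim
  refine le_of_tendsto this ?_
  filter_upwards [Filter.eventually_ge_atTop 2] with n hn
  exact key n hn



lemma arc_Icc {a b : ℝ} (hab : a ≤ b) (h2 : b - a ≤ 2*π) :
    μH[1] (ce '' Icc a b) = ENNReal.ofReal (b - a) :=
  le_antisymm (arc_upper a b) (arc_lower hab h2)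

lemma arc_Ioc {a b : ℝ} (hab : a ≤ b) (h2 : b - a ≤ 2*π) :
    μH[1] (ce '' Ioc a b) = ENNReal.ofReal (b - a) := by
  haveI : NullSingletonClass (μH[1] : Measure ℂ) := MeasureTheory.Measure.noAtoms_hausdorff ℂ one_pos
  apply le_antisymm
  · exact le_trans (measure_mono (image_mono Ioc_subset_Icc_self)) (arc_upper a b)
  · refine le_trans (le_trans (arc_lower hab h2) ?_) le_rfl
    have hsub : ce '' Icc a b ⊆ ce '' Ioc a b ∪ {ce a} := by
      rintro z ⟨t, ht, rfl⟩
      rcases eq_or_lt_of_le ht.1 with heq | hlt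
      · right; rw [← heq]; rfl
      · left; exact ⟨t, ⟨hlt, ht.2⟩, rfl⟩
    calc μH[1] (ce '' Icc a b) ≤ μH[1] (ce '' Ioc a b ∪ {ce a}) := measure_mono hsub
      _ ≤ μH[1] (ce '' Ioc a b) + μH[1] {ce a} := measure_union_le _ _
      _ = μH[1] (ce '' Ioc a b) := by rw [measure_singleton, add_zero]

lemma ce_arg {z : ℂ} (hz : ‖z‖ = 1) : ce (Complex.arg z) = z := by
  have := Complex.norm_mul_exp_arg_mul_I z
  rwa [hz, Complex.ofReal_one, one_mul] at this

lemma arg_ce {t : ℝ} (ht : t ∈ Ioc (-π) π) : Complex.arg (ce t) = t := by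
  rw [ce, Complex.exp_mul_I, Complex.arg_cos_add_sin_mul_I ht]

lemma sphere_eq : Metric.sphere (0:ℂ) 1 = ce '' Ioc (-π) π := by
  ext z
  simp only [Metric.mem_sphere, Complex.dist_eq, sub_zero]
  constructor
  · intro hz
    exact ⟨Complex.arg z, Complex.arg_mem_Ioc z, ce_arg hz⟩
  · rintro ⟨t, _, rfl⟩
    exact ce_abs t

lemma sphere_measure : μH[1] (Metric.sphere (0:ℂ) 1) = ENNReal.ofReal (2*π) := by
  rw [sphere_eq, arc_Ioc (by linarith [Real.pi_pos]) (by linarith)]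
  congr 1; ring

lemma map_arg_eq :
    Measure.map Complex.arg (μH[1].restrict (Metric.sphere (0:ℂ) 1))
      = volume.restrict (Ioc (-π) π) := by
  have hsm : MeasurableSet (Metric.sphere (0:ℂ) 1) :=
    Metric.isClosed_sphere.measurableSet
  have hfin : IsFiniteMeasure
      (Measure.map Complex.arg (μH[1].restrict (Metric.sphere (0:ℂ) 1))) := by
    constructor
    rw [Measure.map_apply Complex.measurable_arg MeasurableSet.univ]
    rw [Set.preimage_univ, Measure.restrict_apply MeasurableSet.univ, Set.univ_inter,
      sphere_measure]
    exact ENNReal.ofReal_lt_top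
  refine Measure.ext_of_Ioc _ _ ?_
  intro a b hab
  rw [Measure.map_apply Complex.measurable_arg measurableSet_Ioc,
    Measure.restrict_apply (Complex.measurable_arg measurableSet_Ioc),
    Measure.restrict_apply measurableSet_Ioc]
  have hseteq : Complex.arg ⁻¹' Ioc a b ∩ Metric.sphere (0:ℂ) 1
      = ce '' Ioc (max a (-π)) (min b π) := by
    ext z
    constructor
    · rintro ⟨hz1, hz2⟩
      simp only [Metric.mem_sphere, Complex.dist_eq, sub_zero] at hz2
      refine ⟨Complex.arg z, ?_, ce_arg hz2⟩
      have h1 := Complex.arg_mem_Ioc z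
      simp only [mem_preimage, mem_Ioc] at hz1
      exact ⟨max_lt hz1.1 h1.1, le_min hz1.2 h1.2⟩
    · rintro ⟨t, ht, rfl⟩
      have ht' : t ∈ Ioc (-π) π := ⟨lt_of_le_of_lt (le_max_right a (-π)) ht.1,
        le_trans ht.2 (min_le_right b π)⟩
      constructor
      · simp only [mem_preimage, mem_Ioc, arg_ce ht']
        exact ⟨lt_of_le_of_lt (le_max_left a (-π)) ht.1, le_trans ht.2 (min_le_left b π)⟩
      · exact ce_mem_sphere t
  rw [hseteq, Set.Ioc_inter_Ioc, Real.volume_Ioc]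
  rcases le_or_gt (max a (-π)) (min b π) with hle | hlt
  · rw [arc_Ioc hle (by
      have h1 : -π ≤ max a (-π) := le_max_right a (-π)
      have h2 : min b π ≤ π := min_le_right b π
      linarith)]
  · rw [Set.Ioc_eq_empty (not_lt.2 hlt.le), Set.image_empty, measure_empty]
    symm
    rw [ENNReal.ofReal_eq_zero]
    linarith [hlt.le]

lemma circle_measure :
    μH[1].restrict (Metric.sphere (0:ℂ) 1)
      = Measure.map ce (volume.restrict (Ioc (-π) π)) := by
  have hsm : MeasurableSet (Metric.sphere (0:ℂ) 1) :=
    Metric.isClosed_sphere.measurableSet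
  have h1 := congrArg (Measure.map ce) map_arg_eq
  rw [Measure.map_map ce_continuous.measurable Complex.measurable_arg] at h1
  rw [← h1]
  symm
  have : (ce ∘ Complex.arg) =ᵐ[μH[1].restrict (Metric.sphere (0:ℂ) 1)] id := by
    filter_upwards [ae_restrict_mem hsm] with z hz
    simp only [Metric.mem_sphere, Complex.dist_eq, sub_zero] at hz
    exact ce_arg hz
  rw [Measure.map_congr this, Measure.map_id]

def Lfun (u v : E3) : ℂ → E3 := fun z => z.re • u + z.im • v

lemma Lfun_norm {u v : E3} (huu : ⟪u,u⟫ = 1) (hvv : ⟪v,v⟫ = 1) (huv : ⟪u,v⟫ = 0)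
    (z : ℂ) : ‖Lfun u v z‖ = ‖z‖ := by
  have hvu : ⟪v,u⟫ = (0:ℝ) := by rw [real_inner_comm]; exact huv
  have hinner : ⟪Lfun u v z, Lfun u v z⟫ = ‖z‖ ^ 2 := by
    simp only [Lfun, inner_add_left, inner_add_right, real_inner_smul_left,
      real_inner_smul_right, huu, hvv, huv, hvu]
    rw [Complex.sq_norm, Complex.normSq_apply]
    ring
  have h1 : ‖Lfun u v z‖ ^ 2 = ‖z‖ ^ 2 := by
    rw [← real_inner_self_eq_norm_sq, hinner]
  calc ‖Lfun u v z‖ = Real.sqrt (‖Lfun u v z‖^2) := (Real.sqrt_sq (norm_nonneg _)).symm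
    _ = Real.sqrt (‖z‖^2) := by rw [h1]
    _ = ‖z‖ := Real.sqrt_sq (norm_nonneg z)

lemma Lfun_isometry {u v : E3} (huu : ⟪u,u⟫ = 1) (hvv : ⟪v,v⟫ = 1) (huv : ⟪u,v⟫ = 0) :
    Isometry (Lfun u v) := by
  apply Isometry.of_dist_eq
  intro z w
  have hsub : Lfun u v z - Lfun u v w = Lfun u v (z - w) := by
    simp only [Lfun, Complex.sub_re, Complex.sub_im, sub_smul]
    abel
  rw [dist_eq_norm, hsub, Lfun_norm huu hvv huv, Complex.dist_eq]

lemma map_restrict_isometry (f : ℂ → E3) (hf : Isometry f) (S : Set ℂ) (hS : MeasurableSet S) :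
    Measure.map f (μH[1].restrict S) = μH[1].restrict (f '' S) := by
  ext A hA
  rw [Measure.map_apply hf.continuous.measurable hA, Measure.restrict_apply hA,
    Measure.restrict_apply (hf.continuous.measurable hA),
    ← Set.image_preimage_inter,
    hf.hausdorffMeasure_image (Or.inl zero_le_one)]

lemma restrict_circle_eq {u v : E3} (huu : ⟪u,u⟫ = 1) (hvv : ⟪v,v⟫ = 1) (huv : ⟪u,v⟫ = 0) :
    μH[1].restrict ((Lfun u v) '' (Metric.sphere (0:ℂ) 1)) =
      Measure.map (fun t : ℝ => Real.cos t • u + Real.sin t • v)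
        (volume.restrict (Ioc (-π) π)) := by
  rw [← map_restrict_isometry _ (Lfun_isometry huu hvv huv) _
    Metric.isClosed_sphere.measurableSet, circle_measure,
    Measure.map_map (Lfun_isometry huu hvv huv).continuous.measurable
      ce_continuous.measurable]
  congr 1
  funext t
  simp only [Function.comp_apply, Lfun, ce, Complex.exp_ofReal_mul_I_re,
    Complex.exp_ofReal_mul_I_im]


@[simp] lemma vec3_apply_0 (a b c : ℝ) : vec3 a b c 0 = a := rfl
@[simp] lemma vec3_apply_1 (a b c : ℝ) : vec3 a b c 1 = b := rfl
@[simp] lemma vec3_apply_2 (a b c : ℝ) : vec3 a b c 2 = c := rfl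
@[simp] lemma vec2_apply_0 (a b : ℝ) : vec2 a b 0 = a := rfl
@[simp] lemma vec2_apply_1 (a b : ℝ) : vec2 a b 1 = b := rfl


theorem stmt3_aux (φ : E3 → ℝ) (hc : ContinuousOn φ (Metric.sphere 0 1))
    (he : ∀ θ ∈ Metric.sphere (0:E3) 1, φ θ = φ (-θ))
    (Φ : E2 → ℝ)
    (hΦ : ∀ x : E2, Φ x =
      2 * φ ((Real.sqrt (1 + (x 0)^2 + (x 1)^2))⁻¹ • vec3 (x 0) (x 1) 1)
        / (1 + (x 0)^2 + (x 1)^2)) :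
    ∀ ω ∈ Metric.sphere (0:E2) 1, ∀ s : ℝ,
      radon2 Φ ω s = (Real.sqrt (1 + s^2))⁻¹ *
        funkT φ ((Real.sqrt (1 + s^2))⁻¹ • vec3 (ω 0) (ω 1) (-s)) := by
  intro ω hω s
  have hs1 : (0:ℝ) < 1 + s^2 := by positivity
  set c : ℝ := Real.sqrt (1 + s^2) with hc_def
  have hc0 : 0 < c := Real.sqrt_pos.2 hs1
  have hc2 : c^2 = 1 + s^2 := Real.sq_sqrt hs1.le
  clear_value c
  have hω2 : (ω 0)^2 + (ω 1)^2 = 1 := by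
    have h1 : ‖ω‖ = 1 := by simpa using hω
    have h2 := congrArg (· ^ 2) h1
    rw [EuclideanSpace.norm_eq] at h2
    simp only [Real.norm_eq_abs, one_pow] at h2
    rw [Real.sq_sqrt (by positivity)] at h2
    rw [Fin.sum_univ_two] at h2
    simpa [sq_abs] using h2
  set u : E3 := c⁻¹ • vec3 (s * ω 0) (s * ω 1) 1 with hu_def
  set v : E3 := vec3 (-(ω 1)) (ω 0) 0 with hv_def
  set θ : E3 := c⁻¹ • vec3 (ω 0) (ω 1) (-s) with hθ_def
  clear_value u v θ
  have hsmul3 : ∀ (r : ℝ) (x : E3) (i : Fin 3), (r • x) i = r * x i := fun r x i => rfl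
  have hadd3 : ∀ (x y : E3) (i : Fin 3), (x + y) i = x i + y i := fun x y i => rfl
  have hinner3 : ∀ x y : E3, ⟪x, y⟫ = x 0 * y 0 + x 1 * y 1 + x 2 * y 2 := by
    intro x y
    rw [PiLp.inner_apply, Fin.sum_univ_three]
    simp [RCLike.inner_apply, mul_comm]
  have huu : ⟪u,u⟫ = (1:ℝ) := by
    rw [hinner3]
    simp only [hu_def, hsmul3, vec3_apply_0, vec3_apply_1, vec3_apply_2]
    field_simp
    linear_combination s^2 * hω2 - hc2
  have hvv : ⟪v,v⟫ = (1:ℝ) := by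
    rw [hinner3]
    simp only [hv_def, vec3_apply_0, vec3_apply_1, vec3_apply_2]
    linear_combination hω2
  have huv : ⟪u,v⟫ = (0:ℝ) := by
    rw [hinner3]
    simp only [hu_def, hv_def, hsmul3, vec3_apply_0, vec3_apply_1, vec3_apply_2]
    ring
  have hθθ : ⟪θ,θ⟫ = (1:ℝ) := by
    rw [hinner3]
    simp only [hθ_def, hsmul3, vec3_apply_0, vec3_apply_1, vec3_apply_2]
    field_simp
    linear_combination hω2 - hc2
  have hθu : ⟪θ,u⟫ = (0:ℝ) := by
    rw [hinner3]
    simp only [hθ_def, hu_def, hsmul3, vec3_apply_0, vec3_apply_1, vec3_apply_2]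
    field_simp
    linear_combination s * hω2
  have hθv : ⟪θ,v⟫ = (0:ℝ) := by
    rw [hinner3]
    simp only [hθ_def, hv_def, hsmul3, vec3_apply_0, vec3_apply_1, vec3_apply_2]
    ring
  -- the circle set is the image of the unit circle under Lfun u v
  have hnorm_sq : ∀ x : E3, ‖x‖^2 = x 0^2 + x 1^2 + x 2^2 := by
    intro x
    rw [← real_inner_self_eq_norm_sq, hinner3]
    ring
  have hcircle : circleSet θ = Lfun u v '' (Metric.sphere (0:ℂ) 1) := by
    ext α
    constructor
    · rintro ⟨hα1, hα2⟩
      have hα1' : α 0^2 + α 1^2 + α 2^2 = 1 := by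
        have : ‖α‖ = 1 := by simpa using hα1
        have := congrArg (· ^ 2) this
        simp only [one_pow] at this
        rw [hnorm_sq] at this
        exact this
      have hrel : ω 0 * α 0 + ω 1 * α 1 = s * α 2 := by
        rw [hinner3] at hα2
        simp only [hθ_def, hsmul3, vec3_apply_0, vec3_apply_1, vec3_apply_2] at hα2
        field_simp at hα2
        linarith
      refine ⟨⟨c * α 2, -(ω 1) * α 0 + ω 0 * α 1⟩, ?_, ?_⟩
      · simp only [Metric.mem_sphere, Complex.dist_eq, sub_zero]
        have habs2 : ‖(⟨c * α 2, -(ω 1) * α 0 + ω 0 * α 1⟩ : ℂ)‖ ^ 2 = 1 := by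
          rw [Complex.sq_norm, Complex.normSq_apply]
          simp only
          linear_combination (α 2^2) * hc2 + (α 0^2 + α 1^2) * hω2 + hα1' -
            (ω 0 * α 0 + ω 1 * α 1 + s * α 2) * hrel
        nlinarith [norm_nonneg (⟨c * α 2, -(ω 1) * α 0 + ω 0 * α 1⟩ : ℂ)]
      · apply PiLp.ext; intro i
        fin_cases i
        · show (((c * α 2) • u + (-(ω 1) * α 0 + ω 0 * α 1) • v) : E3) 0 = α 0
          rw [hadd3, hsmul3, hsmul3]
          simp only [hu_def, hv_def, hsmul3, vec3_apply_0]
          field_simp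
          linear_combination (-(ω 0)) * hrel + (α 0) * hω2
        · show (((c * α 2) • u + (-(ω 1) * α 0 + ω 0 * α 1) • v) : E3) 1 = α 1
          rw [hadd3, hsmul3, hsmul3]
          simp only [hu_def, hv_def, hsmul3, vec3_apply_1]
          field_simp
          linear_combination (-(ω 1)) * hrel + (α 1) * hω2
        · show (((c * α 2) • u + (-(ω 1) * α 0 + ω 0 * α 1) • v) : E3) 2 = α 2
          rw [hadd3, hsmul3, hsmul3]
          simp only [hu_def, hv_def, hsmul3, vec3_apply_2]
          field_simp
          ring
    · rintro ⟨z, hz, rfl⟩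
      have hz1 : ‖z‖ = 1 := by
        simpa [Complex.dist_eq] using hz
      constructor
      · simp only [Metric.mem_sphere, dist_zero_right]
        rw [Lfun_norm huu hvv huv, hz1]
      · show ⟪θ, z.re • u + z.im • v⟫ = (0:ℝ)
        rw [inner_add_right, real_inner_smul_right, real_inner_smul_right, hθu, hθv]
        ring
  -- curve lies on the sphere
  have hγ_mem : ∀ t : ℝ, Real.cos t • u + Real.sin t • v ∈ Metric.sphere (0:E3) 1 := by
    intro t
    have h2 : ‖(⟨Real.cos t, Real.sin t⟩ : ℂ)‖ = 1 := by
      rw [Complex.norm_def, Complex.normSq_mk]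
      rw [show Real.cos t * Real.cos t + Real.sin t * Real.sin t = 1 by
        nlinarith [Real.sin_sq_add_cos_sq t]]
      exact Real.sqrt_one
    have h1 : ‖Real.cos t • u + Real.sin t • v‖ = 1 := by
      have := Lfun_norm huu hvv huv ⟨Real.cos t, Real.sin t⟩
      rw [h2] at this
      exact this
    simpa using h1
  have hγ_cont : Continuous (fun t : ℝ => Real.cos t • u + Real.sin t • v) :=
    (Real.continuous_cos.smul continuous_const).add (Real.continuous_sin.smul continuous_const)
  set g : ℝ → ℝ := fun t => φ (Real.cos t • u + Real.sin t • v) with hg_def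
  have hg_cont : Continuous g := hc.comp_continuous hγ_cont hγ_mem
  -- funkT as an integral over (-π, π]
  have hfunk : funkT φ θ = ∫ t in Ioc (-π) π, g t := by
    have hmeasI : MeasurableSet (Lfun u v '' Metric.sphere (0:ℂ) 1) := by
      rw [← hcircle]
      exact (Metric.isClosed_sphere.inter
        (isClosed_eq (continuous_const.inner continuous_id) continuous_const)).measurableSet
    have hres := restrict_circle_eq huu hvv huv
    have hφ_aesm : AEStronglyMeasurable φ
        (Measure.map (fun t : ℝ => Real.cos t • u + Real.sin t • v)
          (volume.restrict (Ioc (-π) π))) := by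
      rw [← hres]
      refine ContinuousOn.aestronglyMeasurable ?_ hmeasI
      refine hc.mono ?_
      intro x hx
      rw [← hcircle] at hx
      exact hx.1
    rw [funkT, hcircle]
    show ∫ α, φ α ∂(μH[1].restrict (Lfun u v '' Metric.sphere (0:ℂ) 1)) = _
    rw [hres, integral_map hγ_cont.measurable.aemeasurable hφ_aesm]
  -- periodicity from evenness
  have hper : ∀ t : ℝ, g (t + π) = g t := by
    intro t
    have h1 : Real.cos (t+π) • u + Real.sin (t+π) • v
        = -(Real.cos t • u + Real.sin t • v) := by
      rw [Real.cos_add_pi, Real.sin_add_pi, neg_smul, neg_smul, neg_add]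
    show φ _ = φ _
    rw [h1, ← he _ (hγ_mem t)]
  have hii : ∀ a b : ℝ, IntervalIntegrable g volume a b :=
    fun a b => hg_cont.intervalIntegrable a b
  have hhalf : ∫ t in Ioc (-π) π, g t = 2 * ∫ t in (-(π/2))..(π/2), g t := by
    have hππ : -π ≤ π := by linarith [Real.pi_pos]
    have e1 : ∫ t in Ioc (-π) π, g t = ∫ t in (-π)..π, g t :=
      (intervalIntegral.integral_of_le hππ).symm
    have e2 : ∫ t in (π/2)..π, g t = ∫ t in (-(π/2))..(0:ℝ), g t := by
      have := intervalIntegral.integral_comp_add_right (a := -(π/2)) (b := (0:ℝ)) (f := g) π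
      rw [show -(π/2) + π = π/2 by ring, show (0:ℝ) + π = π by ring] at this
      rw [← this]
      exact intervalIntegral.integral_congr (fun x _ => hper x)
    have e3 : ∫ t in (-π)..(-(π/2)), g t = ∫ t in (0:ℝ)..(π/2), g t := by
      have := intervalIntegral.integral_comp_add_right (a := (0:ℝ)) (b := π/2) (f := g) (-π)
      rw [show (0:ℝ) + -π = -π by ring, show π/2 + -π = -(π/2) by ring] at this
      rw [← this]
      refine intervalIntegral.integral_congr (fun x _ => ?_)
      have := hper (x + -π)
      rw [show x + -π + π = x by ring] at this
      exact this.symm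
    have e4 : (∫ t in (-π)..(-(π/2)), g t) + ∫ t in (-(π/2))..π, g t = ∫ t in (-π)..π, g t :=
      intervalIntegral.integral_add_adjacent_intervals (hii _ _) (hii _ _)
    have e5 : (∫ t in (-(π/2))..(π/2), g t) + ∫ t in (π/2)..π, g t = ∫ t in (-(π/2))..π, g t :=
      intervalIntegral.integral_add_adjacent_intervals (hii _ _) (hii _ _)
    have e6 : (∫ t in (-(π/2))..(0:ℝ), g t) + ∫ t in (0:ℝ)..(π/2), g t
        = ∫ t in (-(π/2))..(π/2), g t :=
      intervalIntegral.integral_add_adjacent_intervals (hii _ _) (hii _ _)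
    rw [e1, ← e4, ← e5, e2, e3]
    linarith [e6]
  -- the integrand of the Radon transform
  have hF : ∀ ν : ℝ, Φ (s • ω + ν • perp ω)
      = 2 * φ ((Real.sqrt (1+s^2+ν^2))⁻¹ • vec3 (s*ω 0 - ν*ω 1) (s*ω 1 + ν*ω 0) 1)
        / (1+s^2+ν^2) := by
    intro ν
    rw [hΦ]
    have h0 : (s • ω + ν • perp ω) 0 = s*ω 0 - ν*ω 1 := by
      show s * ω 0 + ν * (perp ω 0) = _
      rw [perp, vec2_apply_0]; ring
    have h1 : (s • ω + ν • perp ω) 1 = s*ω 1 + ν*ω 0 := by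
      show s * ω 1 + ν * (perp ω 1) = _
      rw [perp, vec2_apply_1]
    rw [h0, h1]
    rw [show 1 + (s*ω 0 - ν*ω 1)^2 + (s*ω 1 + ν*ω 0)^2 = 1+s^2+ν^2 by
      linear_combination (s^2+ν^2) * hω2]
  -- change of variables ν = c tan t
  have himg : (fun t : ℝ => c * Real.tan t) '' Ioo (-(π/2)) (π/2) = univ := by
    ext x
    simp only [mem_univ, iff_true]
    refine ⟨Real.arctan (x/c), ⟨Real.neg_pi_div_two_lt_arctan _, Real.arctan_lt_pi_div_two _⟩, ?_⟩
    show c * Real.tan (Real.arctan (x/c)) = x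
    rw [Real.tan_arctan]
    field_simp
  have hinj : InjOn (fun t : ℝ => c * Real.tan t) (Ioo (-(π/2)) (π/2)) := by
    intro x hx y hy hxy
    exact Real.injOn_tan hx hy (mul_left_cancel₀ hc0.ne' hxy)
  have hderiv : ∀ t ∈ Ioo (-(π/2)) (π/2),
      HasDerivWithinAt (fun t : ℝ => c * Real.tan t) (c * (1 / Real.cos t ^ 2))
        (Ioo (-(π/2)) (π/2)) t := by
    intro t ht
    exact ((Real.hasDerivAt_tan (Real.cos_pos_of_mem_Ioo ht).ne').const_mul c).hasDerivWithinAt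
  have hcov : ∫ x : ℝ, Φ (s • ω + x • perp ω)
      = ∫ t in Ioo (-(π/2)) (π/2), (2/c) * g t := by
    have hFfun : (fun x : ℝ => Φ (s • ω + x • perp ω))
        = fun x => 2 * φ ((Real.sqrt (1+s^2+x^2))⁻¹ • vec3 (s*ω 0 - x*ω 1) (s*ω 1 + x*ω 0) 1)
          / (1+s^2+x^2) := funext hF
    rw [hFfun, ← setIntegral_univ, ← himg,
      integral_image_eq_integral_abs_deriv_smul measurableSet_Ioo hderiv hinj]
    refine setIntegral_congr_fun measurableSet_Ioo ?_
    intro t ht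
    have hcos : 0 < Real.cos t := Real.cos_pos_of_mem_Ioo ht
    have htan : Real.tan t = Real.sin t / Real.cos t := Real.tan_eq_sin_div_cos t
    have hden : 1 + s^2 + (c * Real.tan t)^2 = c^2 / Real.cos t^2 := by
      rw [← hc2, htan]
      field_simp
      linear_combination (Real.sin_sq_add_cos_sq t)
    have hsqrt : Real.sqrt (1 + s^2 + (c * Real.tan t)^2) = c / Real.cos t := by
      rw [hden]
      rw [show c^2 / Real.cos t^2 = (c / Real.cos t)^2 by ring]
      exact Real.sqrt_sq (by positivity)
    have hpt : (Real.sqrt (1+s^2+(c * Real.tan t)^2))⁻¹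
        • vec3 (s*ω 0 - (c * Real.tan t)*ω 1) (s*ω 1 + (c * Real.tan t)*ω 0) 1
        = Real.cos t • u + Real.sin t • v := by
      rw [hsqrt]
      apply PiLp.ext; intro i
      fin_cases i
      · show (c / Real.cos t)⁻¹ * (s*ω 0 - (c * Real.tan t)*ω 1)
            = Real.cos t * u 0 + Real.sin t * v 0
        rw [hu_def, hv_def]
        show _ = Real.cos t * (c⁻¹ * (s * ω 0)) + Real.sin t * (-(ω 1))
        rw [htan]
        field_simp
        ring
      · show (c / Real.cos t)⁻¹ * (s*ω 1 + (c * Real.tan t)*ω 0)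
            = Real.cos t * u 1 + Real.sin t * v 1
        rw [hu_def, hv_def]
        show _ = Real.cos t * (c⁻¹ * (s * ω 1)) + Real.sin t * (ω 0)
        rw [htan]
        field_simp
      · show (c / Real.cos t)⁻¹ * 1 = Real.cos t * u 2 + Real.sin t * v 2
        rw [hu_def, hv_def]
        show _ = Real.cos t * (c⁻¹ * 1) + Real.sin t * 0
        field_simp
        ring
    show |c * (1 / Real.cos t^2)| • (2 * φ _ / (1+s^2+(c * Real.tan t)^2)) = (2/c) * g t
    rw [hpt, hden]
    have : |c * (1 / Real.cos t^2)| = c / Real.cos t^2 := by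
      rw [abs_of_pos (by positivity)]
      ring
    rw [this]
    show (c / Real.cos t^2) * (2 * g t / (c^2 / Real.cos t^2)) = (2/c) * g t
    field_simp
  -- final assembly
  rw [radon2, hcov, hfunk, hhalf]
  rw [MeasureTheory.integral_const_mul]
  rw [show ∫ t in Ioo (-(π/2)) (π/2), g t = ∫ t in (-(π/2))..(π/2), g t by
    rw [intervalIntegral.integral_of_le (by linarith [Real.pi_pos]),
      integral_Ioc_eq_integral_Ioo]]
  field_simp


end StereoCircleAux
end StereoAux

/-- `RΦ(ω,s) = (1+s²)^{-1/2} Fφ((ω₁,ω₂,-s)/√(1+s²))`. -/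
theorem stmt3 (φ : E3 → ℝ) (hc : ContinuousOn φ (Metric.sphere 0 1))
    (he : ∀ θ ∈ Metric.sphere (0:E3) 1, φ θ = φ (-θ))
    (Φ : E2 → ℝ)
    (hΦ : ∀ x : E2, Φ x =
      2 * φ ((Real.sqrt (1 + (x 0)^2 + (x 1)^2))⁻¹ • vec3 (x 0) (x 1) 1)
        / (1 + (x 0)^2 + (x 1)^2)) :
    ∀ ω ∈ Metric.sphere (0:E2) 1, ∀ s : ℝ,
      radon2 Φ ω s = (Real.sqrt (1 + s^2))⁻¹ *
        funkT φ ((Real.sqrt (1 + s^2))⁻¹ • vec3 (ω 0) (ω 1) (-s)) :=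
  StereoCircleAux.stmt3_aux φ hc he Φ hΦ
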